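/- arXiv:1705.04638 — 2 statements merged into one kernel-verified Lean document; each statement's English description precedes it below -/
import Mathlib

section
/- For every integer n ≥ 0, the cubic polynomial q(t) = t³ − (196351 + 51729n)t² + (740712 + 183764n)t − (700260 + 165856n) has negative discriminant; consequently q has exactly one real root and two non-real complex-conjugate roots. -/
open Complex in
lemma cubic_aux (b c d : ℝ)
    (hΔ : 18 * b * c * d - 4 * b ^ 3 * d + b ^ 2 * c ^ 2 - 4 * c ^ 3 - 27 * d ^ 2 < 0) :
    ∃ x : ℝ, ∃ z : ℂ, z.im ≠ 0 ∧
      ∀ w : ℂ, w ^ 3 + (b : ℂ) * w ^ 2 + (c : ℂ) * w + (d : ℂ) = 0 ↔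
        w = (x : ℂ) ∨ w = z ∨ w = (starRingEnd ℂ) z := by
  -- a real root via IVT
  set f : ℝ → ℝ := fun t => t ^ 3 + b * t ^ 2 + c * t + d with hf
  set M : ℝ := 1 + |b| + |c| + |d| with hM
  have hab := abs_nonneg b
  have hac := abs_nonneg c
  have had := abs_nonneg d
  have hM1 : 1 ≤ M := by simp only [hM]; linarith
  have hb : |b| ≤ M := by simp only [hM]; linarith
  have hc : |c| ≤ M := by simp only [hM]; linarith
  have hd : |d| ≤ M := by simp only [hM]; linarith
  have hfM : 0 ≤ f M := by
    have h1 : -|b| ≤ b := neg_abs_le b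
    have h2 : -|c| ≤ c := neg_abs_le c
    have h3 : -|d| ≤ d := neg_abs_le d
    have : M ^ 3 = M * M ^ 2 := by ring
    simp only [hf]
    nlinarith [sq_nonneg M, abs_nonneg b, abs_nonneg c, abs_nonneg d,
      mul_le_mul_of_nonneg_right hb (sq_nonneg M)]
  have hfnM : f (-M) ≤ 0 := by
    have h1 : b ≤ |b| := le_abs_self b
    have h3 : d ≤ |d| := le_abs_self d
    have h2 : -|c| ≤ c := neg_abs_le c
    simp only [hf]
    nlinarith [sq_nonneg M, abs_nonneg b, abs_nonneg c, abs_nonneg d,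
      mul_le_mul_of_nonneg_right hb (sq_nonneg M)]
  have hcont : ContinuousOn f (Set.Icc (-M) M) := by fun_prop
  have hmem : (0 : ℝ) ∈ Set.Icc (f (-M)) (f M) := ⟨hfnM, hfM⟩
  obtain ⟨x, -, hx⟩ := intermediate_value_Icc (by linarith : (-M : ℝ) ≤ M) hcont hmem
  have hx : x ^ 3 + b * x ^ 2 + c * x + d = 0 := hx
  -- factor out the root
  set p : ℝ := b + x with hp
  set q : ℝ := c + x * p with hq
  have hdisc : p ^ 2 - 4 * q < 0 := by
    have key : 18 * b * c * d - 4 * b ^ 3 * d + b ^ 2 * c ^ 2 - 4 * c ^ 3 - 27 * d ^ 2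
        = (p ^ 2 - 4 * q) * (x ^ 2 + p * x + q) ^ 2 := by
      rw [hq, hp]
      linear_combination (-27*d + 18*b*c - 4*b^3 + 27*(x^3 + b*x^2 + c*x)) * hx
    by_contra h
    push_neg at h
    nlinarith [sq_nonneg (x ^ 2 + p * x + q)]
  set D : ℝ := 4 * q - p ^ 2 with hD
  have hD0 : 0 < D := by linarith
  set s : ℝ := Real.sqrt D with hs
  have hs2 : s ^ 2 = D := Real.sq_sqrt hD0.le
  have hs0 : 0 < s := Real.sqrt_pos.2 hD0
  refine ⟨x, ⟨-p / 2, s / 2⟩, by simpa using hs0.ne', fun w => ?_⟩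
  set z : ℂ := ⟨-p / 2, s / 2⟩ with hz
  have hzsum : z + (starRingEnd ℂ) z = ((-p : ℝ) : ℂ) := by
    rw [Complex.add_conj]
    simp only [hz]
    push_cast
    ring
  have hzprod : z * (starRingEnd ℂ) z = ((q : ℝ) : ℂ) := by
    rw [Complex.mul_conj]
    congr 1
    simp only [Complex.normSq_mk, hz]
    have h4 : s ^ 2 = 4 * q - p ^ 2 := by rw [hs2, hD]
    linear_combination h4 / 4
  have hpC : (p : ℂ) = (b : ℂ) + (x : ℂ) := by push_cast [hp]; ring
  have hqC : (q : ℂ) = (c : ℂ) + (x : ℂ) * (p : ℂ) := by push_cast [hq]; ring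
  have hxC : (x : ℂ) ^ 3 + (b : ℂ) * (x : ℂ) ^ 2 + (c : ℂ) * (x : ℂ) + (d : ℂ) = 0 := by
    exact_mod_cast congrArg (Complex.ofReal) hx
  have hfact : w ^ 3 + (b : ℂ) * w ^ 2 + (c : ℂ) * w + (d : ℂ)
      = (w - (x : ℂ)) * ((w - z) * (w - (starRingEnd ℂ) z)) := by
    have expand : (w - z) * (w - (starRingEnd ℂ) z)
        = w ^ 2 - (z + (starRingEnd ℂ) z) * w + z * (starRingEnd ℂ) z := by ring
    rw [expand, hzsum, hzprod]
    push_cast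
    linear_combination ((x : ℂ) ^ 2 - w ^ 2) * hpC + ((x : ℂ) - w) * hqC + hxC
  rw [hfact]
  constructor
  · intro h
    rcases mul_eq_zero.1 h with h1 | h2
    · exact Or.inl (sub_eq_zero.1 h1)
    · rcases mul_eq_zero.1 h2 with h3 | h4
      · exact Or.inr (Or.inl (sub_eq_zero.1 h3))
      · exact Or.inr (Or.inr (sub_eq_zero.1 h4))
  · rintro (rfl | rfl | rfl) <;> ring

/-- For every `n ≥ 0`, the cubic `t³ + bt² + ct + d` with
`b = −(196351+51729n)`, `c = 740712+183764n`, `d = −(700260+165856n)` has negative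
discriminant, hence exactly one real root and a pair of non-real conjugate roots. -/
theorem stmt3 (n : ℕ) :
    let b : ℝ := -(196351 + 51729 * (n : ℝ))
    let c : ℝ := 740712 + 183764 * (n : ℝ)
    let d : ℝ := -(700260 + 165856 * (n : ℝ))
    (18 * b * c * d - 4 * b ^ 3 * d + b ^ 2 * c ^ 2 - 4 * c ^ 3 - 27 * d ^ 2 < 0) ∧
    ∃ x : ℝ, ∃ z : ℂ, z.im ≠ 0 ∧
      ∀ w : ℂ, w ^ 3 + (b : ℂ) * w ^ 2 + (c : ℂ) * w + (d : ℂ) = 0 ↔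
        w = (x : ℂ) ∨ w = z ∨ w = (starRingEnd ℂ) z := by
  intro b c d
  have hn : (0 : ℝ) ≤ (n : ℝ) := Nat.cast_nonneg n
  have hΔ : 18 * b * c * d - 4 * b ^ 3 * d + b ^ 2 * c ^ 2 - 4 * c ^ 3 - 27 * d ^ 2 < 0 := by
    simp only [b, c, d]
    nlinarith [hn, sq_nonneg (n : ℝ), pow_nonneg hn 3, pow_nonneg hn 4]
  exact ⟨hΔ, cubic_aux b c d hΔ⟩
end

section
/- Let (p_m, c_m, s_m)_{m≥0} be a sequence with σ(c_{m+1}) = p_m c_m s_m for all m ≥ 0, where σ is an injective substitution. If s_m = ε for all m ≥ n₀ (for some n₀ ≥ 0), then the sequence (p_m, c_m, s_m)_{m ≥ n₀} is periodic: there exists ℓ ≥ 1 such that (p_{m+ℓ}, c_{m+ℓ}, s_{m+ℓ}) = (p_m, c_m, s_m) for all m ≥ n₀. -/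
/-- If `σ` is an injective substitution on a finite alphabet, `σ(c_{m+1}) = p_m c_m s_m`
for all `m`, and the suffixes `s_m` are empty from `n₀` on, then the prefix-suffix
sequence is periodic from `n₀` on. -/
theorem stmt7 {A : Type*} [Finite A] (σ : A → List A) (hne : ∀ a, σ a ≠ [])
    (hinj : Function.Injective σ)
    (p : ℕ → List A) (c : ℕ → A) (s : ℕ → List A)
    (hps : ∀ m, σ (c (m + 1)) = p m ++ [c m] ++ s m)
    (n₀ : ℕ) (hs : ∀ m, n₀ ≤ m → s m = []) :
    ∃ ℓ : ℕ, 1 ≤ ℓ ∧ ∀ m, n₀ ≤ m →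
      p (m + ℓ) = p m ∧ c (m + ℓ) = c m ∧ s (m + ℓ) = s m := by
  classical
  -- for m ≥ n₀, σ (c (m+1)) = p m ++ [c m]
  have hconcat : ∀ m, n₀ ≤ m → σ (c (m + 1)) = p m ++ [c m] := by
    intro m hm
    have := hps m
    rw [hs m hm, List.append_nil] at this
    exact this
  set f : A → A := fun a => (σ a).getLast (hne a) with hf
  have hcf : ∀ m, n₀ ≤ m → c m = f (c (m + 1)) := by
    intro m hm
    have h := hconcat m hm
    have : (σ (c (m + 1))).getLast (hne _) = c m := by
      simp only [h, List.getLast_append]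
      simp
    exact this.symm
  have hpf : ∀ m, n₀ ≤ m → p m = (σ (c (m + 1))).dropLast := by
    intro m hm
    rw [hconcat m hm, List.dropLast_concat]
  -- backward iteration
  have hiter : ∀ k m, n₀ ≤ m → c m = f^[k] (c (m + k)) := by
    intro k
    induction k with
    | zero => intro m hm; simp
    | succ k ih =>
      intro m hm
      have h1 := ih m hm
      have h2 := hcf (m + k) (le_trans hm (Nat.le_add_right _ _))
      show c m = f^[k + 1] (c (m + k + 1))
      rw [Function.iterate_succ_apply, ← h2]
      exact h1
  -- pigeonhole on iterates of f
  obtain ⟨i, j, hij, hfij⟩ :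
      ∃ i j : ℕ, i ≠ j ∧ (f^[i] : A → A) = f^[j] :=
    Finite.exists_ne_map_eq_of_infinite (fun k : ℕ => (f^[k] : A → A))
  wlog hlt : i < j generalizing i j
  · exact this j i hij.symm hfij.symm (by omega)
  set d := j - i with hd
  have hd1 : 1 ≤ d := by omega
  have hcper : ∀ m, n₀ ≤ m → c (m + d) = c m := by
    intro m hm
    have h1 : c m = f^[j] (c (m + j)) := hiter j m hm
    have h2 : c (m + d) = f^[i] (c (m + d + i)) :=
      hiter i (m + d) (le_trans hm (Nat.le_add_right _ _))
    have h3 : m + d + i = m + j := by omega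
    rw [h2, h3, hfij, ← h1]
  refine ⟨d, hd1, fun m hm => ?_⟩
  have hm1 : n₀ ≤ m + 1 := le_trans hm (Nat.le_add_right _ _)
  have hmd : n₀ ≤ m + d := le_trans hm (Nat.le_add_right _ _)
  have hc : c (m + d) = c m := hcper m hm
  have hc1 : c (m + d + 1) = c (m + 1) := by
    have := hcper (m + 1) hm1
    rw [← this]; ring_nf
  refine ⟨?_, hc, ?_⟩
  · rw [hpf (m + d) hmd, hpf m hm, hc1]
  · rw [hs (m + d) hmd, hs m hm]
end
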